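/- arXiv:1807.06106 — 3 statements merged into one kernel-verified Lean document; each statement's English description precedes it below -/
import Mathlib

section
/- For every Markov chain P on finite nonempty state type S and every target set T ⊆ S, the limit reachability probabilities r∞ s = ⨆_{n ∈ ℕ} r n s exist (the supremum is over a monotone bounded sequence) and satisfy the Bellman fixed-point equations: r∞ s = 1 for every s ∈ T, and r∞ s = ∑_{s' ∈ S} P s s' * r∞ s' for every s ∉ T. -/
/-- Bounded-horizon reachability values of a Markov chain `P` w.r.t. target set `T`. -/
def reachVal {S : Type*} [Fintype S] (P : S → S → ℝ) (T : Set S) [DecidablePred (· ∈ T)] :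
    ℕ → S → ℝ
  | 0, s => if s ∈ T then 1 else 0
  | n + 1, s => if s ∈ T then 1 else ∑ s', P s s' * reachVal P T n s'

lemma reachVal_nonneg {S : Type*} [Fintype S] (P : S → S → ℝ)
    (hP0 : ∀ s s', 0 ≤ P s s') (T : Set S) [DecidablePred (· ∈ T)] :
    ∀ n s, 0 ≤ reachVal P T n s := by
  intro n
  induction n with
  | zero => intro s; simp [reachVal]; positivity
  | succ n ih =>
    intro s
    simp only [reachVal]
    split
    · norm_num
    · exact Finset.sum_nonneg fun s' _ => mul_nonneg (hP0 s s') (ih s')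

lemma reachVal_le_one {S : Type*} [Fintype S] (P : S → S → ℝ)
    (hP0 : ∀ s s', 0 ≤ P s s') (hP1 : ∀ s, ∑ s', P s s' = 1)
    (T : Set S) [DecidablePred (· ∈ T)] :
    ∀ n s, reachVal P T n s ≤ 1 := by
  intro n
  induction n with
  | zero => intro s; simp only [reachVal]; split <;> norm_num
  | succ n ih =>
    intro s
    simp only [reachVal]
    split
    · norm_num
    · calc ∑ s', P s s' * reachVal P T n s' ≤ ∑ s', P s s' * 1 :=
            Finset.sum_le_sum fun s' _ => mul_le_mul_of_nonneg_left (ih s') (hP0 s s')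
        _ = 1 := by simp [hP1 s]

lemma reachVal_mono {S : Type*} [Fintype S] (P : S → S → ℝ)
    (hP0 : ∀ s s', 0 ≤ P s s') (T : Set S) [DecidablePred (· ∈ T)] :
    ∀ n s, reachVal P T n s ≤ reachVal P T (n + 1) s := by
  intro n
  induction n with
  | zero =>
    intro s
    simp only [reachVal]
    split
    · exact le_refl _
    · exact Finset.sum_nonneg fun s' _ => mul_nonneg (hP0 s s') (by positivity)
  | succ n ih =>
    intro s
    simp only [reachVal]
    split
    · exact le_refl _
    · exact Finset.sum_le_sum fun s' _ => mul_le_mul_of_nonneg_left (ih s') (hP0 s s')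

/-- The limit reachability probabilities `r∞ s = ⨆ n, r n s` exist (the supremum
is over a monotone bounded sequence) and satisfy the Bellman fixed-point equations:
`r∞ s = 1` on `T` and `r∞ s = ∑ s', P s s' * r∞ s'` off `T`. -/
theorem reachVal_iSup_bellman
    {S : Type*} [Fintype S] [Nonempty S]
    (P : S → S → ℝ)
    (hP0 : ∀ s s', 0 ≤ P s s')
    (hP1 : ∀ s, ∑ s', P s s' = 1)
    (T : Set S) [DecidablePred (· ∈ T)] :
    (∀ s, Monotone fun n => reachVal P T n s) ∧
    (∀ s, BddAbove (Set.range fun n => reachVal P T n s)) ∧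
    (∀ s ∈ T, (⨆ n, reachVal P T n s) = 1) ∧
    (∀ s ∉ T, (⨆ n, reachVal P T n s) = ∑ s', P s s' * ⨆ n, reachVal P T n s') := by
  have hmono : ∀ s, Monotone fun n => reachVal P T n s := fun s =>
    monotone_nat_of_le_succ fun n => reachVal_mono P hP0 T n s
  have hbdd : ∀ s, BddAbove (Set.range fun n => reachVal P T n s) := fun s =>
    ⟨1, fun x ⟨n, hn⟩ => hn ▸ reachVal_le_one P hP0 hP1 T n s⟩
  refine ⟨hmono, hbdd, ?_, ?_⟩
  · intro s hs
    have : ∀ n, reachVal P T n s = 1 := by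
      intro n; cases n <;> simp [reachVal, hs]
    simp [this]
  · intro s hs
    have htend : ∀ s', Filter.Tendsto (fun n => reachVal P T n s') Filter.atTop
        (nhds (⨆ n, reachVal P T n s')) := fun s' =>
      tendsto_atTop_ciSup (hmono s') (hbdd s')
    have h1 : Filter.Tendsto (fun n => reachVal P T (n + 1) s) Filter.atTop
        (nhds (⨆ n, reachVal P T n s)) :=
      (htend s).comp (Filter.tendsto_add_atTop_nat 1)
    have h2 : Filter.Tendsto (fun n => ∑ s', P s s' * reachVal P T n s') Filter.atTop
        (nhds (∑ s', P s s' * ⨆ n, reachVal P T n s')) :=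
      tendsto_finset_sum _ fun s' _ => ((htend s').const_mul (P s s'))
    have heq : (fun n => reachVal P T (n + 1) s) =
        fun n => ∑ s', P s s' * reachVal P T n s' := by
      funext n; simp [reachVal, hs]
    rw [heq] at h1
    exact tendsto_nhds_unique h1 h2
end

section
/- Let P be a Markov chain on finite nonempty state type S and T ⊆ S. Suppose v : S → ℝ satisfies v s ≥ 0 for all s, v s = 1 for all s ∈ T, and v s ≥ ∑_{s' ∈ S} P s s' * v s' for all s ∉ T. Then r n s ≤ v s for every n ∈ ℕ and every s ∈ S; consequently, the limit reachability probability ⨆_n r n s is at most v s. In other words, every nonnegative superharmonic vector that equals 1 on the target states is an upper bound on the reachability probabilities, which is the soundness of the reachability constraints in the linear-programming characterization. -/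
/-- Every nonnegative superharmonic vector that equals 1 on the target states is
an upper bound on the (bounded-horizon and limit) reachability probabilities. -/
theorem superharmonic_upper_bound_reach
    {S : Type*} [Fintype S] [Nonempty S]
    (P : S → S → ℝ)
    (hP0 : ∀ s s', 0 ≤ P s s')
    (hP1 : ∀ s, ∑ s', P s s' = 1)
    (T : Set S) [DecidablePred (· ∈ T)]
    (v : S → ℝ)
    (hv0 : ∀ s, 0 ≤ v s)
    (hvT : ∀ s ∈ T, v s = 1)
    (hvsup : ∀ s ∉ T, (∑ s', P s s' * v s') ≤ v s) :
    (∀ (n : ℕ) (s : S), reachVal P T n s ≤ v s) ∧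
    (∀ s : S, (⨆ n, reachVal P T n s) ≤ v s) := by
  have key : ∀ (n : ℕ) (s : S), reachVal P T n s ≤ v s := by
    intro n
    induction n with
    | zero =>
      intro s
      simp only [reachVal]
      split
      · exact (hvT s ‹_›).ge
      · exact hv0 s
    | succ n ih =>
      intro s
      simp only [reachVal]
      split
      · exact (hvT s ‹_›).ge
      · refine le_trans (Finset.sum_le_sum fun s' _ =>
          mul_le_mul_of_nonneg_left (ih s') (hP0 s s')) (hvsup s ‹_›)
  exact ⟨key, fun s => ciSup_le fun n => key n s⟩
end

section
/- The Johnson-criterion task-success probability P is strictly increasing on (0, ∞): for all real numbers 0 < s < t, P(s) < P(t). (Equivalently, increasing the number of line pairs across an object strictly increases the estimated probability of successful visual analysis.) -/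
lemma johnson_aux_mono :
    StrictMonoOn (fun t : ℝ => ((2.7 : ℝ) + 0.7 * t) * Real.log t) (Set.Ioi 0) := by
  apply strictMonoOn_of_deriv_pos (convex_Ioi 0)
  · exact (continuousOn_const.add (continuousOn_const.mul continuousOn_id)).mul
      (Real.continuousOn_log.mono (by intro x hx; exact ne_of_gt hx))
  · intro x hx
    rw [interior_Ioi] at hx
    have hx0 : (0:ℝ) < x := hx
    have hd : HasDerivAt (fun t : ℝ => ((2.7 : ℝ) + 0.7 * t) * Real.log t)
        (0.7 * Real.log x + ((2.7 : ℝ) + 0.7 * x) * x⁻¹) x := by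
      have h1 : HasDerivAt (fun t : ℝ => (2.7 : ℝ) + 0.7 * t) 0.7 x := by
        simpa using ((hasDerivAt_id x).const_mul (0.7:ℝ)).const_add (2.7:ℝ)
      exact h1.mul (Real.hasDerivAt_log (ne_of_gt hx0))
    rw [hd.deriv]
    have hlog : 1 - x⁻¹ ≤ Real.log x := by
      have := Real.log_le_sub_one_of_pos (inv_pos.mpr hx0)
      rw [Real.log_inv] at this
      linarith
    have hxinv : (0:ℝ) < x⁻¹ := inv_pos.mpr hx0
    nlinarith [mul_pos hx0 hxinv, mul_inv_cancel₀ (ne_of_gt hx0)]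

/-- The Johnson-criterion task-success probability
`P(t) = t^(2.7 + 0.7 t) / (1 + t^(2.7 + 0.7 t))` is strictly increasing on `(0, ∞)`. -/
theorem johnson_criterion_strictMono
    (J : ℝ → ℝ)
    (hJ : ∀ t : ℝ, J t = t ^ ((2.7 : ℝ) + 0.7 * t) / (1 + t ^ ((2.7 : ℝ) + 0.7 * t))) :
    ∀ s t : ℝ, 0 < s → s < t → J s < J t := by
  intro s t hs hst
  have ht : (0:ℝ) < t := hs.trans hst
  rw [hJ s, hJ t]
  set a := s ^ ((2.7 : ℝ) + 0.7 * s) with ha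
  set b := t ^ ((2.7 : ℝ) + 0.7 * t) with hb
  have hap : 0 < a := Real.rpow_pos_of_pos hs _
  have hbp : 0 < b := Real.rpow_pos_of_pos ht _
  have hab : a < b := by
    rw [ha, hb, Real.rpow_def_of_pos hs, Real.rpow_def_of_pos ht]
    exact Real.exp_lt_exp.mpr (by simpa [mul_comm] using johnson_aux_mono hs (Set.mem_Ioi.mpr ht) hst)
  rw [div_lt_div_iff₀ (by linarith) (by linarith)]
  nlinarith
end
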